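/- Suppose m = d and the diffusion coefficient a = σσ' is uniformly elliptic. Then for every T > 0 and x ∈ C([-τ,T],ℝ^d), I_T(x) = J_T(x), where J_T(x) = ∫₀ᵀ Λ(x_s, ẋ(s)) ds if x is absolutely continuous on [0,T] with ẋ ∈ L¹([0,T],ℝ^d) its a.e. derivative (with the convention J_T(x) = ∞ when s ↦ Λ(x_s,ẋ(s)) is not integrable), J_T(x) = ∞ if x is not absolutely continuous on [0,T], and Λ(φ,ν) = (1/2)(b(φ) − ν)' (a(φ))⁻¹ (b(φ) − ν) for (φ,ν) ∈ 𝐂 × ℝ^d. -/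

import Mathlib

open MeasureTheory Set Metric
open scoped ENNReal

noncomputable section

/-- `ℝ^d`. -/
abbrev Vec (d : ℕ) := EuclideanSpace ℝ (Fin d)

/-- The state space `𝐂 = C([-τ,0],ℝ^d)`. -/
abbrev Hist (τ : ℝ) (d : ℕ) := C(Icc (-τ) (0:ℝ), Vec d)

/-- The path space `C([-τ,T],ℝ^d)`. -/
abbrev Traj (τ T : ℝ) (d : ℕ) := C(Icc (-τ) T, Vec d)

/-- Matrix acting on a vector. -/
def matVec {d m : ℕ} (M : Matrix (Fin d) (Fin m) ℝ) (v : Vec m) : Vec d :=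
  WithLp.toLp 2 (fun i => ∑ j, M i j * v j)

/-- Squared Frobenius norm of a matrix. -/
def frobSq {d m : ℕ} (M : Matrix (Fin d) (Fin m) ℝ) : ℝ := ∑ i, ∑ j, (M i j) ^ 2

/-- Frobenius norm of a matrix. -/
def frobNorm {d m : ℕ} (M : Matrix (Fin d) (Fin m) ℝ) : ℝ := Real.sqrt (frobSq M)

/-- Evaluation of a path at a time `t ∈ [-τ,T]` (clamped). -/
def ev {d : ℕ} {τ T : ℝ} (h : -τ ≤ T) (x : Traj τ T d) (t : ℝ) : Vec d :=
  x (projIcc (-τ) T h t)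

/-- The history segment `x_t ∈ 𝐂` of a path `x ∈ C([-τ,T],ℝ^d)`, for `t ∈ [0,T]`. -/
def seg {d : ℕ} {τ T : ℝ} (h : -τ ≤ T) (x : Traj τ T d) (t : ℝ) : Hist τ d :=
  ⟨fun s => x (projIcc (-τ) T h (t + s.1)),
    x.continuous.comp <| continuous_projIcc.comp <| continuous_const.add continuous_subtype_val⟩

/-- The uniform Lipschitz assumption on the coefficients:
`|b(φ)−b(ψ)|² + |σ(φ)−σ(ψ)|² ≤ κ₁ ‖φ−ψ‖²`. -/
def LipCoeff {d m : ℕ} {τ : ℝ} (b : Hist τ d → Vec d)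
    (σ' : Hist τ d → Matrix (Fin d) (Fin m) ℝ) (κ₁ : ℝ) : Prop :=
  ∀ φ ψ : Hist τ d, ‖b φ - b ψ‖ ^ 2 + frobSq (σ' φ - σ' ψ) ≤ κ₁ * ‖φ - ψ‖ ^ 2

/-- The linear growth bound `|b(φ)|² + |σ(φ)|² ≤ κ₂ (1 + ‖φ‖²)`. -/
def GrowthCoeff {d m : ℕ} {τ : ℝ} (b : Hist τ d → Vec d)
    (σ' : Hist τ d → Matrix (Fin d) (Fin m) ℝ) (κ₂ : ℝ) : Prop :=
  ∀ φ : Hist τ d, ‖b φ‖ ^ 2 + frobSq (σ' φ) ≤ κ₂ * (1 + ‖φ‖ ^ 2)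

/-- The set `U_T(x)` of controls `u ∈ L²([0,T],ℝ^m)` satisfying
`x(t) = x(0) + ∫₀ᵗ b(x_s) ds + ∫₀ᵗ σ(x_s) u(s) ds` for `t ∈ [0,T]`. -/
def controls {d m : ℕ} {τ T : ℝ} (h : -τ ≤ T) (b : Hist τ d → Vec d)
    (σ' : Hist τ d → Matrix (Fin d) (Fin m) ℝ) (x : Traj τ T d) : Set (ℝ → Vec m) :=
  {u | MemLp u 2 (volume.restrict (Icc 0 T)) ∧
    ∀ t ∈ Icc (0:ℝ) T,
      ev h x t = ev h x 0 + (∫ s in (0:ℝ)..t, b (seg h x s)) +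
        ∫ s in (0:ℝ)..t, matVec (σ' (seg h x s)) (u s)}

/-- The rate function `I_T(x) = inf_{u ∈ U_T(x)} ½∫₀ᵀ |u(s)|² ds` (with value `∞` if
`U_T(x) = ∅`). -/
def rate {d m : ℕ} {τ T : ℝ} (h : -τ ≤ T) (b : Hist τ d → Vec d)
    (σ' : Hist τ d → Matrix (Fin d) (Fin m) ℝ) (x : Traj τ T d) : ℝ≥0∞ :=
  ⨅ (u : ℝ → Vec m) (_ : u ∈ controls h b σ' x),
    ENNReal.ofReal ((1/2) * ∫ s in (0:ℝ)..T, ‖u s‖ ^ 2)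

open Classical in
/-- The rate function `I_T^φ(x)`, which is `I_T(x)` if `x₀ = φ` and `∞` otherwise. -/
def rateAt {d m : ℕ} {τ T : ℝ} (h : -τ ≤ T) (b : Hist τ d → Vec d)
    (σ' : Hist τ d → Matrix (Fin d) (Fin m) ℝ) (φ : Hist τ d) (x : Traj τ T d) : ℝ≥0∞ :=
  if seg h x 0 = φ then rate h b σ' x else ⊤

/-- Uniform ellipticity of `a = σσ'`: `ν' a(φ) ν ≥ c |ν|²`. -/
def UnifElliptic {d : ℕ} {τ : ℝ} (σ' : Hist τ d → Matrix (Fin d) (Fin d) ℝ) (c : ℝ) : Prop :=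
  ∀ (φ : Hist τ d) (ν : Fin d → ℝ),
    c * (∑ i, ν i ^ 2) ≤ dotProduct ν ((σ' φ * Matrix.transpose (σ' φ)).mulVec ν)

/-- The Lagrangian `Λ(φ,ν) = ½ (b(φ)−ν)' (a(φ))⁻¹ (b(φ)−ν)`, where `a = σσ'`. -/
def lagrangian {d : ℕ} {τ : ℝ} (b : Hist τ d → Vec d)
    (σ' : Hist τ d → Matrix (Fin d) (Fin d) ℝ) (φ : Hist τ d) (ν : Vec d) : ℝ :=
  (1/2) * dotProduct (fun i => b φ i - ν i)
    ((σ' φ * Matrix.transpose (σ' φ))⁻¹.mulVec (fun i => b φ i - ν i))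

/-- `J_T(x) = ∫₀ᵀ Λ(x_s, ẋ(s)) ds` if `x` is absolutely continuous on `[0,T]` (with derivative
`ẋ ∈ L¹([0,T],ℝ^d)`), and `∞` otherwise; the inner lower integral is `∞` when
`s ↦ Λ(x_s,ẋ(s))` is not integrable. -/
def Jrate {d : ℕ} {τ T : ℝ} (h : -τ ≤ T) (b : Hist τ d → Vec d)
    (σ' : Hist τ d → Matrix (Fin d) (Fin d) ℝ) (x : Traj τ T d) : ℝ≥0∞ :=
  ⨅ (x' : ℝ → Vec d) (_ : IntegrableOn x' (Icc 0 T) volume ∧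
      ∀ t ∈ Icc (0:ℝ) T, ev h x t = ev h x 0 + ∫ s in (0:ℝ)..t, x' s),
    ∫⁻ s in Icc (0:ℝ) T, ENNReal.ofReal (lagrangian b σ' (seg h x s) (x' s))

section Aux

variable {d : ℕ} {τ T : ℝ}

lemma matVec_eq_mulVec {d m : ℕ} (M : Matrix (Fin d) (Fin m) ℝ) (v : Vec m) :
    matVec M v = M.mulVec v := by
  funext i; simp [matVec, Matrix.mulVec, dotProduct]

lemma frobSq_nonneg {d m : ℕ} (M : Matrix (Fin d) (Fin m) ℝ) : 0 ≤ frobSq M := by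
  unfold frobSq; positivity

lemma vec_norm_sq (v : Vec d) : ‖v‖ ^ 2 = ∑ i, v i ^ 2 := by
  rw [EuclideanSpace.norm_eq, Real.sq_sqrt (by positivity)]
  simp [sq_abs]

lemma continuous_seg (h : -τ ≤ T) (x : Traj τ T d) : Continuous fun s => seg h x s := by
  let F : C(ℝ × Icc (-τ) (0:ℝ), Vec d) :=
    ⟨fun p => x (projIcc (-τ) T h (p.1 + p.2.1)),
      x.continuous.comp <| continuous_projIcc.comp <|
        continuous_fst.add (continuous_subtype_val.comp continuous_snd)⟩
  have : (fun s => seg h x s) = ⇑F.curry := by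
    funext s; ext r; rfl
  rw [this]; exact F.curry.continuous

end Aux
section Aux2

variable {d : ℕ} {τ T : ℝ} {bb : Hist τ d → Vec d}
  {σm : Hist τ d → Matrix (Fin d) (Fin d) ℝ} {κ₁ c : ℝ}

lemma lip_b (hκ : 0 ≤ κ₁) (hlip : LipCoeff bb σm κ₁) (φ ψ : Hist τ d) :
    ‖bb φ - bb ψ‖ ≤ Real.sqrt κ₁ * ‖φ - ψ‖ := by
  have h1 := hlip φ ψ
  have h2 : ‖bb φ - bb ψ‖ ^ 2 ≤ κ₁ * ‖φ - ψ‖ ^ 2 := by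
    nlinarith [frobSq_nonneg (σm φ - σm ψ)]
  calc ‖bb φ - bb ψ‖ = Real.sqrt (‖bb φ - bb ψ‖ ^ 2) := (Real.sqrt_sq (norm_nonneg _)).symm
    _ ≤ Real.sqrt (κ₁ * ‖φ - ψ‖ ^ 2) := Real.sqrt_le_sqrt h2
    _ = Real.sqrt κ₁ * ‖φ - ψ‖ := by
        rw [Real.sqrt_mul hκ, Real.sqrt_sq (norm_nonneg _)]

lemma lip_σ (hκ : 0 ≤ κ₁) (hlip : LipCoeff bb σm κ₁) (φ ψ : Hist τ d) (i j : Fin d) :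
    |σm φ i j - σm ψ i j| ≤ Real.sqrt κ₁ * ‖φ - ψ‖ := by
  have h1 := hlip φ ψ
  have hsq : (σm φ i j - σm ψ i j) ^ 2 ≤ frobSq (σm φ - σm ψ) := by
    have h3 : ((σm φ - σm ψ) i j) ^ 2 ≤ ∑ j', ((σm φ - σm ψ) i j') ^ 2 :=
      Finset.single_le_sum (f := fun j' => ((σm φ - σm ψ) i j') ^ 2)
        (fun _ _ => sq_nonneg _) (Finset.mem_univ j)
    have h4 : ∑ j', ((σm φ - σm ψ) i j') ^ 2 ≤ frobSq (σm φ - σm ψ) :=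
      Finset.single_le_sum (f := fun i' => ∑ j', ((σm φ - σm ψ) i' j') ^ 2)
        (fun _ _ => by positivity) (Finset.mem_univ i)
    simpa [Matrix.sub_apply] using h3.trans h4
  have h2 : (σm φ i j - σm ψ i j) ^ 2 ≤ κ₁ * ‖φ - ψ‖ ^ 2 := by nlinarith [sq_nonneg (‖bb φ - bb ψ‖)]
  calc |σm φ i j - σm ψ i j| = Real.sqrt ((σm φ i j - σm ψ i j) ^ 2) :=
        (Real.sqrt_sq_eq_abs _).symm
    _ ≤ Real.sqrt (κ₁ * ‖φ - ψ‖ ^ 2) := Real.sqrt_le_sqrt h2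
    _ = Real.sqrt κ₁ * ‖φ - ψ‖ := by
        rw [Real.sqrt_mul hκ, Real.sqrt_sq (norm_nonneg _)]

lemma continuous_bseg (hκ : 0 ≤ κ₁) (hlip : LipCoeff bb σm κ₁) (h : -τ ≤ T) (x : Traj τ T d) :
    Continuous fun s => bb (seg h x s) := by
  have hb : LipschitzWith (Real.sqrt κ₁).toNNReal bb := by
    apply LipschitzWith.of_dist_le_mul
    intro φ ψ
    rw [dist_eq_norm, dist_eq_norm, Real.coe_toNNReal _ (Real.sqrt_nonneg _)]
    exact lip_b hκ hlip φ ψ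
  exact hb.continuous.comp (continuous_seg h x)

lemma continuous_σseg (hκ : 0 ≤ κ₁) (hlip : LipCoeff bb σm κ₁) (h : -τ ≤ T) (x : Traj τ T d) :
    Continuous fun s => σm (seg h x s) := by
  apply continuous_matrix
  intro i j
  have hb : LipschitzWith (Real.sqrt κ₁).toNNReal (fun φ => σm φ i j) := by
    apply LipschitzWith.of_dist_le_mul
    intro φ ψ
    rw [Real.dist_eq, dist_eq_norm, Real.coe_toNNReal _ (Real.sqrt_nonneg _)]
    exact lip_σ hκ hlip φ ψ i j
  exact hb.continuous.comp (continuous_seg h x)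

lemma det_ne_zero (hc : 0 < c) (hell : UnifElliptic σm c) (φ : Hist τ d) :
    (σm φ).det ≠ 0 := by
  intro hdet0
  rw [← Matrix.det_transpose] at hdet0
  obtain ⟨v, hv, hmul⟩ := Matrix.exists_mulVec_eq_zero_iff.2 hdet0
  have h1 := hell φ v
  have h2 : dotProduct v ((σm φ * (σm φ).transpose).mulVec v) = 0 := by
    rw [← Matrix.mulVec_mulVec, hmul, Matrix.mulVec_zero, dotProduct_zero]
  have h3 : ∑ i, v i ^ 2 ≤ 0 := by nlinarith
  have h4 : ∀ i, v i = 0 := by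
    intro i
    have h5 : v i ^ 2 ≤ ∑ x, v x ^ 2 := Finset.single_le_sum (f := fun i => v i ^ 2)
      (fun _ _ => sq_nonneg _) (Finset.mem_univ i)
    nlinarith [sq_nonneg (v i)]
  exact hv (funext h4)

lemma dot_inv_eq {S : Matrix (Fin d) (Fin d) ℝ} (hdet : S.det ≠ 0) (v : Fin d → ℝ) :
    dotProduct v ((S * S.transpose)⁻¹.mulVec v) = ∑ i, (S⁻¹.mulVec v) i ^ 2 := by
  rw [Matrix.mul_inv_rev, ← Matrix.mulVec_mulVec, ← Matrix.transpose_nonsing_inv,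
    Matrix.dotProduct_mulVec, Matrix.vecMul_transpose]
  simp [dotProduct, sq]

lemma mulVec_inv_cancel {S : Matrix (Fin d) (Fin d) ℝ} (hdet : S.det ≠ 0) (v : Fin d → ℝ) :
    S.mulVec (S⁻¹.mulVec v) = v := by
  rw [Matrix.mulVec_mulVec, Matrix.mul_nonsing_inv _ (isUnit_iff_ne_zero.mpr hdet),
    Matrix.one_mulVec]

end Aux2
section Aux3

variable {d : ℕ} {τ T : ℝ}

lemma norm_matVec_le {d m : ℕ} (M : Matrix (Fin d) (Fin m) ℝ) (v : Vec m) :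
    ‖matVec M v‖ ≤ frobNorm M * ‖v‖ := by
  have h1 : ‖matVec M v‖ ^ 2 ≤ frobSq M * ‖v‖ ^ 2 := by
    rw [vec_norm_sq, vec_norm_sq]
    unfold frobSq
    have : ∀ i, (matVec M v) i = ∑ j, M i j * v j := fun i => rfl
    simp only [this]
    calc ∑ i, (∑ j, M i j * v j) ^ 2
        ≤ ∑ i, (∑ j, M i j ^ 2) * (∑ j, v j ^ 2) := Finset.sum_le_sum fun i _ =>
          Finset.sum_mul_sq_le_sq_mul_sq _ _ _
      _ = (∑ i, ∑ j, M i j ^ 2) * ∑ j, v j ^ 2 := by rw [Finset.sum_mul]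
  calc ‖matVec M v‖ = Real.sqrt (‖matVec M v‖ ^ 2) := (Real.sqrt_sq (norm_nonneg _)).symm
    _ ≤ Real.sqrt (frobSq M * ‖v‖ ^ 2) := Real.sqrt_le_sqrt h1
    _ = frobNorm M * ‖v‖ := by
        rw [Real.sqrt_mul (frobSq_nonneg M), Real.sqrt_sq (norm_nonneg _)]; rfl

lemma continuous_matVec {d m : ℕ} :
    Continuous fun p : Matrix (Fin d) (Fin m) ℝ × Vec m => matVec p.1 p.2 := by
  have h1 : Continuous fun p : Matrix (Fin d) (Fin m) ℝ × Vec m =>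
      (fun i => ∑ j, p.1 i j * p.2 j : Fin d → ℝ) := by
    apply continuous_pi; intro i
    apply continuous_finset_sum; intro j _
    exact (continuous_fst.matrix_elem i j).mul
      (by fun_prop)
  exact (PiLp.continuous_toLp 2 (fun _ : Fin d => ℝ)).comp h1

lemma aesm_matVec {d m : ℕ} {μ : Measure ℝ} {A : ℝ → Matrix (Fin d) (Fin m) ℝ} {u : ℝ → Vec m}
    (hA : Continuous A) (hu : AEStronglyMeasurable u μ) :
    AEStronglyMeasurable (fun s => matVec (A s) (u s)) μ := by
  haveI : TopologicalSpace.PseudoMetrizableSpace (Matrix (Fin d) (Fin m) ℝ) :=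
    inferInstanceAs (TopologicalSpace.PseudoMetrizableSpace (Fin d → Fin m → ℝ))
  exact continuous_matVec.comp_aestronglyMeasurable (hA.aestronglyMeasurable.prodMk hu)

lemma lintegral_ofReal_eq {g : ℝ → ℝ} (hg : IntegrableOn g (Icc 0 T) volume)
    (hpos : ∀ s, 0 ≤ g s) :
    ∫⁻ s in Icc (0:ℝ) T, ENNReal.ofReal (g s) = ENNReal.ofReal (∫ s in Icc (0:ℝ) T, g s) :=
  (ofReal_integral_eq_lintegral_ofReal hg (ae_of_all _ hpos)).symm

lemma integrable_of_lintegral_lt {g : ℝ → ℝ}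
    (hm : AEStronglyMeasurable g (volume.restrict (Icc 0 T))) (hpos : ∀ s, 0 ≤ g s)
    (hfin : ∫⁻ s in Icc (0:ℝ) T, ENNReal.ofReal (g s) < ⊤) :
    IntegrableOn g (Icc 0 T) volume :=
  ⟨hm, (hasFiniteIntegral_iff_ofReal (ae_of_all _ hpos)).2 hfin⟩

end Aux3
section Aux4

variable {d : ℕ} {τ : ℝ} {bb : Hist τ d → Vec d} {σm : Hist τ d → Matrix (Fin d) (Fin d) ℝ}

lemma matVec_matVec_inv {S : Matrix (Fin d) (Fin d) ℝ} (hdet : S.det ≠ 0) (w : Vec d) :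
    matVec S (matVec S⁻¹ w) = w := by
  apply WithLp.ofLp_injective 2
  rw [matVec_eq_mulVec, matVec_eq_mulVec, Matrix.mulVec_mulVec,
    Matrix.mul_nonsing_inv _ (isUnit_iff_ne_zero.2 hdet), Matrix.one_mulVec]

lemma matVec_inv_matVec {S : Matrix (Fin d) (Fin d) ℝ} (hdet : S.det ≠ 0) (u : Vec d) :
    matVec S⁻¹ (matVec S u) = u := by
  apply WithLp.ofLp_injective 2
  rw [matVec_eq_mulVec, matVec_eq_mulVec, Matrix.mulVec_mulVec,
    Matrix.nonsing_inv_mul _ (isUnit_iff_ne_zero.2 hdet), Matrix.one_mulVec]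

lemma lagrangian_eq_norm {φ : Hist τ d} (hdet : (σm φ).det ≠ 0) (ν : Vec d) :
    lagrangian bb σm φ ν = (1/2) * ‖matVec (σm φ)⁻¹ (ν - bb φ)‖ ^ 2 := by
  unfold lagrangian
  rw [dot_inv_eq hdet, vec_norm_sq]
  congr 1
  refine Finset.sum_congr rfl fun i _ => ?_
  have e1 : (σm φ)⁻¹.mulVec (fun i => bb φ i - ν i) i = -(matVec (σm φ)⁻¹ (ν - bb φ) i) := by
    show ∑ j, (σm φ)⁻¹ i j * (bb φ j - ν j) = -∑ j, (σm φ)⁻¹ i j * ((ν - bb φ) j)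
    rw [← Finset.sum_neg_distrib]
    refine Finset.sum_congr rfl fun j _ => ?_
    have hj : (ν - bb φ) j = ν j - bb φ j := rfl
    rw [hj]; ring
  rw [e1, neg_sq]

lemma continuous_frobNorm {d m : ℕ} :
    Continuous (frobNorm : Matrix (Fin d) (Fin m) ℝ → ℝ) := by
  unfold frobNorm
  apply Real.continuous_sqrt.comp
  unfold frobSq
  apply continuous_finset_sum; intro i _
  apply continuous_finset_sum; intro j _
  exact ((continuous_apply j).comp (continuous_apply i)).pow 2

end Aux4
/-- Lemma 3.3: if `m = d` and `a = σσ'` is uniformly elliptic then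
`I_T(x) = J_T(x)` for every `T > 0` and `x ∈ C([-τ,T],ℝ^d)`. -/
theorem stmt_3 {d : ℕ} (hd : 0 < d) {τ : ℝ} (hτ : 0 < τ)
    (b : Hist τ d → Vec d) (σ' : Hist τ d → Matrix (Fin d) (Fin d) ℝ)
    {κ₁ : ℝ} (hκ₁ : 0 < κ₁) (hlip : LipCoeff b σ' κ₁)
    {c : ℝ} (hc : 0 < c) (hell : UnifElliptic σ' c)
    {T : ℝ} (hT : 0 < T) (h : -τ ≤ T) (x : Traj τ T d) :
    rate h b σ' x = Jrate h b σ' x := by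
  have hκ0 : (0:ℝ) ≤ κ₁ := hκ₁.le
  have hdet : ∀ s : ℝ, (σ' (seg h x s)).det ≠ 0 := fun s => det_ne_zero hc hell _
  have hcb : Continuous fun s => b (seg h x s) := continuous_bseg hκ0 hlip h x
  have hcσ : Continuous fun s => σ' (seg h x s) := continuous_σseg hκ0 hlip h x
  haveI : IsFiniteMeasure (volume.restrict (Icc (0:ℝ) T)) :=
    ⟨by rw [Measure.restrict_apply_univ]; exact measure_Icc_lt_top⟩
  apply le_antisymm
  · -- rate ≤ Jrate
    refine le_iInf fun x' => le_iInf fun hx' => ?_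
    obtain ⟨hint, heqx⟩ := hx'
    by_cases hfin :
        (∫⁻ s in Icc (0:ℝ) T, ENNReal.ofReal (lagrangian b σ' (seg h x s) (x' s))) = ⊤
    · exact hfin ▸ le_top
    set u : ℝ → Vec d := fun s => matVec (σ' (seg h x s))⁻¹ (x' s - b (seg h x s)) with hu_def
    have hpt : ∀ s, lagrangian b σ' (seg h x s) (x' s) = (1/2) * ‖u s‖ ^ 2 := fun s =>
      lagrangian_eq_norm (hdet s) (x' s)
    have hcσi : Continuous fun s => (σ' (seg h x s))⁻¹ := by
      have e : (fun s => (σ' (seg h x s))⁻¹)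
          = fun s => ((σ' (seg h x s)).det)⁻¹ • (σ' (seg h x s)).adjugate := by
        funext s; rw [Matrix.inv_def, Ring.inverse_eq_inv']
      rw [e]
      exact (hcσ.matrix_det.inv₀ hdet).smul hcσ.matrix_adjugate
    have haesm_u : AEStronglyMeasurable u (volume.restrict (Icc 0 T)) :=
      aesm_matVec hcσi (hint.1.sub hcb.aestronglyMeasurable)
    have hlag : ∫⁻ s in Icc (0:ℝ) T, ENNReal.ofReal (lagrangian b σ' (seg h x s) (x' s))
        = ∫⁻ s in Icc (0:ℝ) T, ENNReal.ofReal ((1/2) * ‖u s‖ ^ 2) :=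
      lintegral_congr fun s => by rw [hpt s]
    have hhalf : IntegrableOn (fun s => (1/2) * ‖u s‖ ^ 2) (Icc 0 T) volume := by
      refine integrable_of_lintegral_lt
        (((haesm_u.norm.aemeasurable.pow_const 2).const_mul _).aestronglyMeasurable)
        (fun s => by positivity) ?_
      rw [← hlag]
      exact lt_top_iff_ne_top.2 hfin
    have hsq : IntegrableOn (fun s => ‖u s‖ ^ 2) (Icc 0 T) volume := by
      have h2 := hhalf.const_mul 2
      have e : (fun s => (2:ℝ) * ((1/2) * ‖u s‖ ^ 2)) = fun s => ‖u s‖ ^ 2 := by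
        funext s; ring
      rwa [e] at h2
    have hu2 : MemLp u 2 (volume.restrict (Icc 0 T)) :=
      (memLp_two_iff_integrable_sq_norm haesm_u).2 hsq
    have hcancel : (fun s => matVec (σ' (seg h x s)) (u s)) = fun s => x' s - b (seg h x s) :=
      funext fun s => matVec_matVec_inv (hdet s) _
    have hmem : u ∈ controls h b σ' x := by
      refine ⟨hu2, fun t ht => ?_⟩
      have hsub : Set.uIoc (0:ℝ) t ⊆ Icc 0 T := by
        rw [uIoc_of_le ht.1]
        exact fun y hy => ⟨hy.1.le, hy.2.trans ht.2⟩
      have hx'II : IntervalIntegrable x' volume 0 t :=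
        intervalIntegrable_iff.2 (hint.mono_set hsub)
      have hbII : IntervalIntegrable (fun s => b (seg h x s)) volume 0 t :=
        hcb.intervalIntegrable 0 t
      have hsplit : ∫ s in (0:ℝ)..t, x' s
          = (∫ s in (0:ℝ)..t, b (seg h x s)) + ∫ s in (0:ℝ)..t, matVec (σ' (seg h x s)) (u s) := by
        rw [hcancel, intervalIntegral.integral_sub hx'II hbII]
        abel
      rw [heqx t ht, hsplit]
      abel
    have hvalue : ENNReal.ofReal ((1/2) * ∫ s in (0:ℝ)..T, ‖u s‖ ^ 2)
        = ∫⁻ s in Icc (0:ℝ) T, ENNReal.ofReal (lagrangian b σ' (seg h x s) (x' s)) := by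
      rw [hlag, lintegral_ofReal_eq hhalf (fun s => by positivity)]
      congr 1
      rw [integral_Icc_eq_integral_Ioc, ← intervalIntegral.integral_of_le hT.le,
        intervalIntegral.integral_const_mul]
    exact le_of_le_of_eq (iInf₂_le u hmem) hvalue
  · -- Jrate ≤ rate
    refine le_iInf fun u => le_iInf fun hu => ?_
    obtain ⟨hu2, hequ⟩ := hu
    set x' : ℝ → Vec d := fun s => b (seg h x s) + matVec (σ' (seg h x s)) (u s) with hx'def
    have haesm_u : AEStronglyMeasurable u (volume.restrict (Icc 0 T)) := hu2.aestronglyMeasurable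
    have hpt : ∀ s, lagrangian b σ' (seg h x s) (x' s) = (1/2) * ‖u s‖ ^ 2 := by
      intro s
      have e2 : x' s - b (seg h x s) = matVec (σ' (seg h x s)) (u s) := by
        simp only [hx'def]; abel
      have e : matVec (σ' (seg h x s))⁻¹ (x' s - b (seg h x s)) = u s := by
        rw [e2, matVec_inv_matVec (hdet s)]
      rw [lagrangian_eq_norm (hdet s), e]
    have hu1 : IntegrableOn u (Icc 0 T) volume :=
      memLp_one_iff_integrable.1 (hu2.mono_exponent (by norm_num))
    obtain ⟨C, hC⟩ := (isCompact_Icc (a := (0:ℝ)) (b := T)).exists_bound_of_continuousOn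
      (continuous_frobNorm.comp hcσ).continuousOn
    have hσu_int : IntegrableOn (fun s => matVec (σ' (seg h x s)) (u s)) (Icc 0 T) volume := by
      refine Integrable.mono (hu1.norm.const_mul C) (aesm_matVec hcσ haesm_u) ?_
      refine (ae_restrict_mem measurableSet_Icc).mono fun s hs => ?_
      have h3 : frobNorm (σ' (seg h x s)) ≤ C :=
        le_trans (le_abs_self _) (by simpa [Real.norm_eq_abs] using hC s hs)
      calc ‖matVec (σ' (seg h x s)) (u s)‖
          ≤ frobNorm (σ' (seg h x s)) * ‖u s‖ := norm_matVec_le _ _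
        _ ≤ C * ‖u s‖ := mul_le_mul_of_nonneg_right h3 (norm_nonneg _)
        _ ≤ ‖C * ‖u s‖‖ := le_abs_self _
    have hint : IntegrableOn x' (Icc 0 T) volume := by
      have hadd := hcb.integrableOn_Icc.add hσu_int
      have e : x' = (fun s => b (seg h x s)) + fun s => matVec (σ' (seg h x s)) (u s) := rfl
      rwa [e]
    have heqx : ∀ t ∈ Icc (0:ℝ) T, ev h x t = ev h x 0 + ∫ s in (0:ℝ)..t, x' s := by
      intro t ht
      have hsub : Set.uIoc (0:ℝ) t ⊆ Icc 0 T := by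
        rw [uIoc_of_le ht.1]
        exact fun y hy => ⟨hy.1.le, hy.2.trans ht.2⟩
      have hσuII : IntervalIntegrable (fun s => matVec (σ' (seg h x s)) (u s)) volume 0 t :=
        intervalIntegrable_iff.2 (hσu_int.mono_set hsub)
      have hsplit : ∫ s in (0:ℝ)..t, x' s
          = (∫ s in (0:ℝ)..t, b (seg h x s)) + ∫ s in (0:ℝ)..t, matVec (σ' (seg h x s)) (u s) := by
        simp only [hx'def]
        exact intervalIntegral.integral_add (hcb.intervalIntegrable 0 t) hσuII
      rw [hequ t ht, hsplit]
      abel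
    have hsq : IntegrableOn (fun s => (1/2) * ‖u s‖ ^ 2) (Icc 0 T) volume :=
      ((memLp_two_iff_integrable_sq_norm haesm_u).1 hu2).const_mul _
    have hvalue : (∫⁻ s in Icc (0:ℝ) T, ENNReal.ofReal (lagrangian b σ' (seg h x s) (x' s)))
        = ENNReal.ofReal ((1/2) * ∫ s in (0:ℝ)..T, ‖u s‖ ^ 2) := by
      have h1 : ∫⁻ s in Icc (0:ℝ) T, ENNReal.ofReal (lagrangian b σ' (seg h x s) (x' s))
          = ∫⁻ s in Icc (0:ℝ) T, ENNReal.ofReal ((1/2) * ‖u s‖ ^ 2) :=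
        lintegral_congr fun s => by rw [hpt s]
      rw [h1, lintegral_ofReal_eq hsq (fun s => by positivity)]
      congr 1
      rw [integral_Icc_eq_integral_Ioc, ← intervalIntegral.integral_of_le hT.le,
        intervalIntegral.integral_const_mul]
    exact le_of_le_of_eq (iInf₂_le x' ⟨hint, heqx⟩) hvalue
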